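/- arXiv:2212.09887 — 4 statements merged into one kernel-verified Lean document; each statement's English description precedes it below -/
import Mathlib

section
/- Assume A_q = exp(hH) and that Q − P + A_qᵀ P A_q is negative definite. Let x, r ∈ ℝ^n and let U = (u_0, …, u_{N−1}) be any input sequence with u_i ∈ ℝ^m. Set x⁺ = A_q x + h B_q u_0, r⁺ = exp(hH) r, and let Û = (u_1, …, u_{N−1}, 0) be the shifted input sequence obtained by dropping u_0 and appending the zero vector. Then J(x⁺, r⁺, Û) ≤ J(x, r, U) − u_0ᵀ R u_0 − (x − r)ᵀ Q (x − r). -/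
open Matrix Filter Topology

/-- Predicted states of the quantized system: `x₀ = x`, `x_{i+1} = A_q x_i + h B_q u_i`
(inputs beyond the horizon are taken to be `0`, but they are never used below). -/
noncomputable def predState {n m N : ℕ} (Aq : Matrix (Fin n) (Fin n) ℝ)
    (Bq : Matrix (Fin n) (Fin m) ℝ) (h : ℝ) (x : Fin n → ℝ)
    (U : Fin N → Fin m → ℝ) : ℕ → (Fin n → ℝ)
  | 0 => x
  | i + 1 => Aq *ᵥ (predState Aq Bq h x U i) +
      h • (Bq *ᵥ (if hi : i < N then U ⟨i, hi⟩ else 0))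

/-- Reference states: `r_i = (exp (h H))^i r`. -/
noncomputable def refState {n : ℕ} (H : Matrix (Fin n) (Fin n) ℝ) (h : ℝ)
    (r : Fin n → ℝ) (i : ℕ) : Fin n → ℝ :=
  ((NormedSpace.exp (h • H)) ^ i) *ᵥ r

/-- The MPC cost
`J(x, r, U) = (x_N - r_N)ᵀ P (x_N - r_N) + Σ_{i<N} [(x_i - r_i)ᵀ Q (x_i - r_i) + u_iᵀ R u_i]`. -/
noncomputable def mpcCost {n m N : ℕ} (Aq : Matrix (Fin n) (Fin n) ℝ)
    (Bq : Matrix (Fin n) (Fin m) ℝ) (H : Matrix (Fin n) (Fin n) ℝ) (h : ℝ)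
    (P Q : Matrix (Fin n) (Fin n) ℝ) (R : Matrix (Fin m) (Fin m) ℝ)
    (x r : Fin n → ℝ) (U : Fin N → Fin m → ℝ) : ℝ :=
  (predState Aq Bq h x U N - refState H h r N) ⬝ᵥ
      (P *ᵥ (predState Aq Bq h x U N - refState H h r N)) +
    ∑ i : Fin N,
      ((predState Aq Bq h x U i - refState H h r i) ⬝ᵥ
          (Q *ᵥ (predState Aq Bq h x U i - refState H h r i)) +
        (U i) ⬝ᵥ (R *ᵥ (U i)))

/-- The quantized input set `𝒰^N` with `𝒰 = {-1,0,1}^m`. -/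
def quantSet (m N : ℕ) : Set (Fin N → Fin m → ℝ) :=
  {U | ∀ i j, U i j = -1 ∨ U i j = 0 ∨ U i j = 1}

/-- The value function `V(x,r) = min_{U ∈ 𝒰^N} J(x,r,U)`. -/
noncomputable def valueFn {n m N : ℕ} (Aq : Matrix (Fin n) (Fin n) ℝ)
    (Bq : Matrix (Fin n) (Fin m) ℝ) (H : Matrix (Fin n) (Fin n) ℝ) (h : ℝ)
    (P Q : Matrix (Fin n) (Fin n) ℝ) (R : Matrix (Fin m) (Fin m) ℝ)
    (x r : Fin n → ℝ) : ℝ :=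
  sInf ((fun U => mpcCost Aq Bq H h P Q R x r U) '' quantSet m N)

/-- The shifted input sequence: drop `u₀` and append `0`. -/
def shiftSeq {m N : ℕ} (U : Fin N → Fin m → ℝ) : Fin N → Fin m → ℝ :=
  fun i => if hi : (i : ℕ) + 1 < N then U ⟨(i : ℕ) + 1, hi⟩ else 0


/-- shifted-sequence cost inequality. -/
theorem stmt2 {n m N : ℕ} (hN : 0 < N) (h : ℝ) (hh : 0 < h)
    (Aq H : Matrix (Fin n) (Fin n) ℝ) (Bq : Matrix (Fin n) (Fin m) ℝ)
    (P Q : Matrix (Fin n) (Fin n) ℝ) (R : Matrix (Fin m) (Fin m) ℝ)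
    (hP : P.PosDef) (hQ : Q.PosDef) (hR : R.PosDef)
    (hA : Aq = NormedSpace.exp (h • H))
    (hneg : (-(Q - P + Aqᵀ * P * Aq)).PosDef)
    (x r : Fin n → ℝ) (U : Fin N → Fin m → ℝ) :
    mpcCost Aq Bq H h P Q R
        (Aq *ᵥ x + h • (Bq *ᵥ U ⟨0, hN⟩))
        (NormedSpace.exp (h • H) *ᵥ r)
        (shiftSeq U) ≤
      mpcCost Aq Bq H h P Q R x r U -
        (U ⟨0, hN⟩) ⬝ᵥ (R *ᵥ (U ⟨0, hN⟩)) -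
        (x - r) ⬝ᵥ (Q *ᵥ (x - r)) := by
  classical
  set E := NormedSpace.exp (h • H) with hE
  set u0 := U ⟨0, hN⟩ with hu0
  set xp := Aq *ᵥ x + h • (Bq *ᵥ u0) with hxp
  -- shifted predicted states
  have hpred : ∀ i, i ≤ N →
      predState Aq Bq h xp (shiftSeq U) i = predState Aq Bq h x U (i + 1) := by
    intro i
    induction i with
    | zero =>
      intro _
      simp only [predState, hxp]
      rw [dif_pos hN]
    | succ i ih =>
      intro hiN
      have hi : i < N := Nat.lt_of_succ_le hiN
      have ih' := ih (Nat.le_of_lt hi)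
      show Aq *ᵥ (predState Aq Bq h xp (shiftSeq U) i) +
          h • (Bq *ᵥ (if hj : i < N then shiftSeq U ⟨i, hj⟩ else 0)) =
        Aq *ᵥ (predState Aq Bq h x U (i + 1)) +
          h • (Bq *ᵥ (if hj : i + 1 < N then U ⟨i + 1, hj⟩ else 0))
      rw [ih', dif_pos hi]
      rfl
  -- shifted reference states
  have href : ∀ i : ℕ, refState H h (E *ᵥ r) i = refState H h r (i + 1) := by
    intro i
    simp only [refState, ← hE, mulVec_mulVec, ← pow_succ]
  -- abbreviations
  set F : ℕ → ℝ := fun i =>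
    (predState Aq Bq h x U i - refState H h r i) ⬝ᵥ
      (Q *ᵥ (predState Aq Bq h x U i - refState H h r i)) with hF
  set G : ℕ → ℝ := fun i =>
    if hi : i < N then U ⟨i, hi⟩ ⬝ᵥ (R *ᵥ U ⟨i, hi⟩) else 0 with hG
  set d : Fin n → ℝ := predState Aq Bq h x U N - refState H h r N with hd
  -- terminal state of shifted problem
  have hterm : predState Aq Bq h xp (shiftSeq U) N - refState H h (E *ᵥ r) N
      = Aq *ᵥ d := by
    rw [hpred N le_rfl, href N]
    show Aq *ᵥ (predState Aq Bq h x U N) +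
        h • (Bq *ᵥ (if hj : N < N then U ⟨N, hj⟩ else 0)) -
        E ^ (N + 1) *ᵥ r = Aq *ᵥ d
    rw [dif_neg (lt_irrefl N), mulVec_zero, smul_zero, add_zero, pow_succ',
      ← mulVec_mulVec, hd, mulVec_sub, hA]
    rfl
  -- input term of shifted problem
  have hinput : ∀ i : Fin N, shiftSeq U i ⬝ᵥ (R *ᵥ shiftSeq U i) = G (i + 1) := by
    intro i
    by_cases hi : (i : ℕ) + 1 < N
    · simp [shiftSeq, hG, hi]
    · simp [shiftSeq, hG, hi]
  -- sums
  have hsumF : ∑ i : Fin N, F ((i : ℕ) + 1) = (∑ i : Fin N, F i) + F N - F 0 := by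
    rw [Fin.sum_univ_eq_sum_range (fun i => F (i + 1)) N,
      Fin.sum_univ_eq_sum_range (fun i => F i) N]
    have := Finset.sum_range_succ' F N
    rw [Finset.sum_range_succ] at this
    linarith
  have hsumG : ∑ i : Fin N, G ((i : ℕ) + 1) = (∑ i : Fin N, G i) + G N - G 0 := by
    rw [Fin.sum_univ_eq_sum_range (fun i => G (i + 1)) N,
      Fin.sum_univ_eq_sum_range (fun i => G i) N]
    have := Finset.sum_range_succ' G N
    rw [Finset.sum_range_succ] at this
    linarith
  have hGN : G N = 0 := by simp [hG]
  have hG0 : G 0 = u0 ⬝ᵥ (R *ᵥ u0) := by simp [hG, hN, hu0]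
  have hF0 : F 0 = (x - r) ⬝ᵥ (Q *ᵥ (x - r)) := by
    simp [hF, predState, refState]
  -- expand both costs
  have hnew : mpcCost Aq Bq H h P Q R xp (E *ᵥ r) (shiftSeq U) =
      (Aq *ᵥ d) ⬝ᵥ (P *ᵥ (Aq *ᵥ d)) +
        ((∑ i : Fin N, F i) + F N - F 0 + ((∑ i : Fin N, G i) - G 0)) := by
    unfold mpcCost
    rw [hterm]
    have : ∀ i : Fin N,
        (predState Aq Bq h xp (shiftSeq U) i - refState H h (E *ᵥ r) i) ⬝ᵥ
          (Q *ᵥ (predState Aq Bq h xp (shiftSeq U) i - refState H h (E *ᵥ r) i)) +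
          shiftSeq U i ⬝ᵥ (R *ᵥ shiftSeq U i) = F ((i : ℕ) + 1) + G ((i : ℕ) + 1) := by
      intro i
      rw [hpred i (Nat.le_of_lt i.isLt), href i, hinput i]
    rw [Finset.sum_congr rfl fun i _ => this i, Finset.sum_add_distrib, hsumF, hsumG,
      hGN]
    ring
  have hold : mpcCost Aq Bq H h P Q R x r U =
      d ⬝ᵥ (P *ᵥ d) + ((∑ i : Fin N, F i) + (∑ i : Fin N, G i)) := by
    unfold mpcCost
    rw [← hd]
    congr 1
    rw [Finset.sum_congr rfl (g := fun i : Fin N => F (i : ℕ) + G (i : ℕ))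
      (fun i _ => by simp [hF, hG, i.isLt]), Finset.sum_add_distrib]
  rw [hnew, hold, hG0, hF0]
  -- key quadratic inequality
  have hkey : (Aq *ᵥ d) ⬝ᵥ (P *ᵥ (Aq *ᵥ d)) + F N - d ⬝ᵥ (P *ᵥ d) ≤ 0 := by
    have h1 := hneg.posSemidef.dotProduct_mulVec_nonneg d
    simp only [star_trivial] at h1
    have h2 : (Aq *ᵥ d) ⬝ᵥ (P *ᵥ (Aq *ᵥ d)) = d ⬝ᵥ ((Aqᵀ * P * Aq) *ᵥ d) := by
      rw [Matrix.mul_assoc, ← mulVec_mulVec, ← mulVec_mulVec,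
        dotProduct_mulVec d Aqᵀ, vecMul_transpose]
    have h3 : F N = d ⬝ᵥ (Q *ᵥ d) := rfl
    have h4 : d ⬝ᵥ ((-(Q - P + Aqᵀ * P * Aq)) *ᵥ d) =
        -(d ⬝ᵥ (Q *ᵥ d)) + d ⬝ᵥ (P *ᵥ d) - d ⬝ᵥ ((Aqᵀ * P * Aq) *ᵥ d) := by
      rw [neg_mulVec, dotProduct_neg, Matrix.add_mulVec, Matrix.sub_mulVec,
        dotProduct_add, dotProduct_sub]
      ring
    rw [h4] at h1
    rw [h2, h3]
    linarith
  linarith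
end

section
/- Assume A_q = exp(hH) and that Q − P + A_qᵀ P A_q is negative definite. Let x, r ∈ ℝ^n and let U* ∈ 𝒰^N be a minimizer of U ↦ J(x, r, U) over 𝒰^N, with first element u*_0. Set x⁺ = A_q x + h B_q u*_0 and r⁺ = exp(hH) r. Then V(x⁺, r⁺) ≤ V(x, r) − (x − r)ᵀ Q (x − r) − u*_0ᵀ R u*_0. In particular V is non-increasing along the closed loop. -/
open Matrix Filter Topology

lemma quantSet_finite (m N : ℕ) : (quantSet m N).Finite := by
  apply Set.Finite.subset (Set.Finite.pi (t := fun _ : Fin N =>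
      Set.pi Set.univ (fun _ : Fin m => ({-1, 0, 1} : Set ℝ)))
    (fun _ => Set.Finite.pi (fun _ : Fin m =>
      ((Set.finite_singleton (1:ℝ)).insert 0).insert (-1))))
  intro U hU
  simp only [Set.mem_pi, Set.mem_univ, forall_true_left, Set.mem_insert_iff,
    Set.mem_singleton_iff]
  intro i j
  exact hU i j

lemma predState_shift {n m N : ℕ} (hN : 0 < N) (Aq : Matrix (Fin n) (Fin n) ℝ)
    (Bq : Matrix (Fin n) (Fin m) ℝ) (h : ℝ) (x : Fin n → ℝ) (U : Fin N → Fin m → ℝ) :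
    ∀ i, predState Aq Bq h (Aq *ᵥ x + h • (Bq *ᵥ U ⟨0, hN⟩)) (shiftSeq U) i
      = predState Aq Bq h x U (i + 1)
  | 0 => by simp [predState, hN]
  | (i + 1) => by
      have ih := predState_shift hN Aq Bq h x U i
      simp only [predState, ih]
      congr 2
      by_cases hi : i < N
      · rw [dif_pos hi]
        by_cases hi2 : i + 1 < N
        · rw [dif_pos hi2]; simp [shiftSeq, hi2]
        · rw [dif_neg hi2]; simp [shiftSeq, hi2]
      · rw [dif_neg hi, dif_neg (by omega)]

lemma refState_shift {n : ℕ} (H : Matrix (Fin n) (Fin n) ℝ) (h : ℝ) (r : Fin n → ℝ) (i : ℕ) :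
    refState H h (NormedSpace.exp (h • H) *ᵥ r) i = refState H h r (i + 1) := by
  simp [refState, mulVec_mulVec, pow_succ]

lemma quad_mulVec {n : ℕ} (Aq P : Matrix (Fin n) (Fin n) ℝ) (e : Fin n → ℝ) :
    (Aq *ᵥ e) ⬝ᵥ (P *ᵥ (Aq *ᵥ e)) = e ⬝ᵥ ((Aqᵀ * P * Aq) *ᵥ e) := by
  rw [mulVec_mulVec, dotProduct_mulVec, dotProduct_mulVec, ← vecMul_transpose,
    vecMul_vecMul, mul_assoc]

/-- value-function descent inequality along the closed loop. -/
theorem stmt3 {n m N : ℕ} (hN : 0 < N) (h : ℝ) (hh : 0 < h)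
    (Aq H : Matrix (Fin n) (Fin n) ℝ) (Bq : Matrix (Fin n) (Fin m) ℝ)
    (P Q : Matrix (Fin n) (Fin n) ℝ) (R : Matrix (Fin m) (Fin m) ℝ)
    (hP : P.PosDef) (hQ : Q.PosDef) (hR : R.PosDef)
    (hA : Aq = NormedSpace.exp (h • H))
    (hneg : (-(Q - P + Aqᵀ * P * Aq)).PosDef)
    (x r : Fin n → ℝ) (Ustar : Fin N → Fin m → ℝ)
    (hmem : Ustar ∈ quantSet m N)
    (hmin : ∀ U ∈ quantSet m N,
      mpcCost Aq Bq H h P Q R x r Ustar ≤ mpcCost Aq Bq H h P Q R x r U) :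
    valueFn (N := N) Aq Bq H h P Q R
        (Aq *ᵥ x + h • (Bq *ᵥ Ustar ⟨0, hN⟩))
        (NormedSpace.exp (h • H) *ᵥ r) ≤
      valueFn (N := N) Aq Bq H h P Q R x r -
        (x - r) ⬝ᵥ (Q *ᵥ (x - r)) -
        (Ustar ⟨0, hN⟩) ⬝ᵥ (R *ᵥ (Ustar ⟨0, hN⟩)) := by
  classical
  set s : ℕ → ℝ := fun i =>
    (predState Aq Bq h x Ustar i - refState H h r i) ⬝ᵥ
      (Q *ᵥ (predState Aq Bq h x Ustar i - refState H h r i)) with hsdef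
  set g : ℕ → ℝ := fun i =>
    (if hi : i < N then Ustar ⟨i, hi⟩ else 0) ⬝ᵥ
      (R *ᵥ (if hi : i < N then Ustar ⟨i, hi⟩ else 0)) with hgdef
  have hmemU' : shiftSeq Ustar ∈ quantSet m N := by
    intro i j
    unfold shiftSeq
    split_ifs with hi
    · exact hmem _ j
    · right; left; rfl
  have hJ : mpcCost Aq Bq H h P Q R x r Ustar
      = (predState Aq Bq h x Ustar N - refState H h r N) ⬝ᵥ
          (P *ᵥ (predState Aq Bq h x Ustar N - refState H h r N))
        + ∑ i ∈ Finset.range N, (s i + g i) := by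
    unfold mpcCost
    congr 1
    rw [← Fin.sum_univ_eq_sum_range (fun i => s i + g i) N]
    refine Finset.sum_congr rfl fun i _ => ?_
    simp [hsdef, hgdef, i.isLt]
  have hXs := predState_shift hN Aq Bq h x Ustar
  have hRs := refState_shift H h r
  have hXN1 : predState Aq Bq h x Ustar (N + 1) = Aq *ᵥ predState Aq Bq h x Ustar N := by
    simp [predState]
  have hRN1 : refState H h r (N + 1) = Aq *ᵥ refState H h r N := by
    simp only [refState, pow_succ']
    rw [← mulVec_mulVec, hA]
  have hJ' : mpcCost Aq Bq H h P Q R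
        (Aq *ᵥ x + h • (Bq *ᵥ Ustar ⟨0, hN⟩)) (NormedSpace.exp (h • H) *ᵥ r) (shiftSeq Ustar)
      = (Aq *ᵥ (predState Aq Bq h x Ustar N - refState H h r N)) ⬝ᵥ
          (P *ᵥ (Aq *ᵥ (predState Aq Bq h x Ustar N - refState H h r N)))
        + ∑ i ∈ Finset.range N, (s (i + 1) + g (i + 1)) := by
    unfold mpcCost
    rw [hXs N, hRs N, hXN1, hRN1, ← mulVec_sub]
    congr 1
    rw [← Fin.sum_univ_eq_sum_range (fun i => s (i + 1) + g (i + 1)) N]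
    refine Finset.sum_congr rfl fun i _ => ?_
    rw [hXs i, hRs i]
    have hg : shiftSeq Ustar i = if hi : (i : ℕ) + 1 < N then Ustar ⟨(i : ℕ) + 1, hi⟩ else 0 := rfl
    simp only [hsdef, hgdef, hg]
  have hsum : ∑ i ∈ Finset.range N, (s (i + 1) + g (i + 1))
      = ∑ i ∈ Finset.range N, (s i + g i) + (s N + g N) - (s 0 + g 0) := by
    have h1 := Finset.sum_range_succ' (fun i => s i + g i) N
    have h2 := Finset.sum_range_succ (fun i => s i + g i) N
    linarith [h1, h2]
  have hgN : g N = 0 := by simp [hgdef]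
  have hg0 : g 0 = (Ustar ⟨0, hN⟩) ⬝ᵥ (R *ᵥ (Ustar ⟨0, hN⟩)) := by
    simp [hgdef, hN]
  have hs0 : s 0 = (x - r) ⬝ᵥ (Q *ᵥ (x - r)) := by
    have hX0 : predState Aq Bq h x Ustar 0 = x := rfl
    have hR0 : refState H h r 0 = r := by simp [refState]
    rw [hsdef]; simp only [hX0, hR0]
  -- negative definiteness
  have hnegsd := hneg.posSemidef.dotProduct_mulVec_nonneg (predState Aq Bq h x Ustar N - refState H h r N)
  rw [star_trivial] at hnegsd
  set e : Fin n → ℝ := predState Aq Bq h x Ustar N - refState H h r N with hedef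
  have hqe : e ⬝ᵥ ((-(Q - P + Aqᵀ * P * Aq)) *ᵥ e)
      = -(e ⬝ᵥ (Q *ᵥ e) - e ⬝ᵥ (P *ᵥ e) + e ⬝ᵥ ((Aqᵀ * P * Aq) *ᵥ e)) := by
    rw [neg_mulVec, dotProduct_neg, add_mulVec, sub_mulVec, dotProduct_add, dotProduct_sub]
  rw [hqe] at hnegsd
  have hkey : e ⬝ᵥ (Q *ᵥ e) - e ⬝ᵥ (P *ᵥ e) + e ⬝ᵥ ((Aqᵀ * P * Aq) *ᵥ e) ≤ 0 := by linarith
  have hcost : mpcCost Aq Bq H h P Q R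
        (Aq *ᵥ x + h • (Bq *ᵥ Ustar ⟨0, hN⟩)) (NormedSpace.exp (h • H) *ᵥ r) (shiftSeq Ustar)
      ≤ mpcCost Aq Bq H h P Q R x r Ustar
        - (x - r) ⬝ᵥ (Q *ᵥ (x - r)) - (Ustar ⟨0, hN⟩) ⬝ᵥ (R *ᵥ (Ustar ⟨0, hN⟩)) := by
    rw [hJ, hJ', hsum, quad_mulVec]
    have hsN : s N = e ⬝ᵥ (Q *ᵥ e) := rfl
    rw [hsN, hgN, hs0, hg0]
    linarith [hkey]
  have hfin := quantSet_finite m N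
  have hVx : valueFn (N := N) Aq Bq H h P Q R x r = mpcCost Aq Bq H h P Q R x r Ustar := by
    refine le_antisymm (csInf_le (hfin.image _).bddBelow ⟨Ustar, hmem, rfl⟩) ?_
    refine le_csInf ⟨_, ⟨Ustar, hmem, rfl⟩⟩ ?_
    rintro b ⟨U, hU, rfl⟩
    exact hmin U hU
  have hVp : valueFn (N := N) Aq Bq H h P Q R
        (Aq *ᵥ x + h • (Bq *ᵥ Ustar ⟨0, hN⟩)) (NormedSpace.exp (h • H) *ᵥ r)
      ≤ mpcCost Aq Bq H h P Q R
        (Aq *ᵥ x + h • (Bq *ᵥ Ustar ⟨0, hN⟩)) (NormedSpace.exp (h • H) *ᵥ r)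
        (shiftSeq Ustar) :=
    csInf_le (hfin.image _).bddBelow ⟨shiftSeq Ustar, hmemU', rfl⟩
  rw [hVx]
  exact le_trans hVp hcost
end

section
/- (Theorem 1, asymptotic stability form.) Assume A_q = exp(hH), Q − P + A_qᵀ P A_q is negative definite, and H is Hurwitz (every eigenvalue of H, regarded over ℂ, has strictly negative real part). Then along every quantized MPC closed-loop trajectory (x_q(k), r(k), U*(k)) one has x_q(k) → 0 as k → ∞. -/
open Matrix Filter Topology

open NormedSpace
open scoped ENNReal NNReal

attribute [local instance] Matrix.linftyOpNormedAddCommGroup Matrix.linftyOpNormedRing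
  Matrix.linftyOpNormedAlgebra

/-- If `v` is an eigenvector of `M` with eigenvalue `μ`, it is an eigenvector of `exp M`
with eigenvalue `exp μ`. -/
lemma exp_mulVec_eigen {n : ℕ} (M : Matrix (Fin n) (Fin n) ℂ) (μ : ℂ) (v : Fin n → ℂ)
    (hv : M *ᵥ v = μ • v) : (exp M) *ᵥ v = Complex.exp μ • v := by
  have hpow : ∀ k : ℕ, M ^ k *ᵥ v = μ ^ k • v := by
    intro k
    induction k with
    | zero => simp
    | succ k ih =>
        rw [pow_succ, ← Matrix.mulVec_mulVec, hv, Matrix.mulVec_smul, ih, pow_succ]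
        rw [smul_smul, mul_comm]
  let φ : Matrix (Fin n) (Fin n) ℂ →ₗ[ℂ] (Fin n → ℂ) :=
    { toFun := fun A => A *ᵥ v
      map_add' := fun A B => Matrix.add_mulVec _ _ _
      map_smul' := fun c A => by simpa using Matrix.smul_mulVec c A v }
  have hφc : Continuous φ := φ.continuous_of_finiteDimensional
  have h1 : (exp M) *ᵥ v = φ (exp M) := rfl
  rw [h1, exp_eq_tsum (𝕂 := ℂ)]
  have hs : Summable (fun k : ℕ => ((Nat.factorial k : ℂ)⁻¹) • M ^ k) := expSeries_summable' M
  have h2 : φ (∑' k : ℕ, ((Nat.factorial k : ℂ)⁻¹) • M ^ k) = ∑' k : ℕ, φ (((Nat.factorial k : ℂ)⁻¹) • M ^ k) := by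
    exact (hs.hasSum.map φ hφc).tsum_eq.symm
  rw [h2]
  have h3 : ∀ k : ℕ, φ (((Nat.factorial k : ℂ)⁻¹) • M ^ k) = (((Nat.factorial k : ℂ)⁻¹) * μ ^ k) • v := by
    intro k
    show (((Nat.factorial k : ℂ)⁻¹) • M ^ k) *ᵥ v = _
    rw [Matrix.smul_mulVec, hpow, smul_smul]
  simp_rw [h3]
  rw [Summable.tsum_smul_const]
  · congr 1
    rw [Complex.exp_eq_exp_ℂ, exp_eq_tsum (𝕂 := ℂ)]
    simp [smul_eq_mul]
  · have := expSeries_summable' (𝕂 := ℂ) μ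
    simpa [smul_eq_mul] using this

/-- Every spectral value of `exp M` has the form `exp μ` for `μ` in the spectrum of `M`. -/
lemma spectrum_exp_subset {n : ℕ} (M : Matrix (Fin n) (Fin n) ℂ) {lam : ℂ}
    (hl : lam ∈ spectrum ℂ (exp M)) : ∃ μ ∈ spectrum ℂ M, lam = Complex.exp μ := by
  classical
  set E : Module.End ℂ (Fin n → ℂ) := Matrix.toLinAlgEquiv' (exp M) with hE
  set L : Module.End ℂ (Fin n → ℂ) := Matrix.toLinAlgEquiv' M with hL
  have hlE : lam ∈ spectrum ℂ E := by
    rwa [hE, AlgEquiv.spectrum_eq]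
  have hEig : E.HasEigenvalue lam := Module.End.hasEigenvalue_iff_mem_spectrum.mpr hlE
  set V := Module.End.eigenspace E lam with hV
  have hVne : V ≠ ⊥ := hEig
  haveI : Nontrivial V := Submodule.nontrivial_iff_ne_bot.mpr hVne
  have hcomm : E * L = L * E := by
    rw [hE, hL, ← _root_.map_mul, ← _root_.map_mul]
    congr 1
    exact ((Commute.refl M).exp_left).eq
  have hinv : ∀ x ∈ V, L x ∈ V := by
    intro x hx
    rw [hV, Module.End.mem_eigenspace_iff] at hx ⊢
    have : E (L x) = L (E x) := by
      have := congrArg (fun f : Module.End ℂ (Fin n → ℂ) => f x) hcomm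
      simpa using this
    rw [this, hx, _root_.map_smul]
  set L' : Module.End ℂ V := L.restrict hinv with hL'
  obtain ⟨μ, hμ⟩ := Module.End.exists_eigenvalue L'
  obtain ⟨w, hw⟩ := hμ.exists_hasEigenvector
  have hw0 : (w : Fin n → ℂ) ≠ 0 := by
    simpa [Submodule.coe_eq_zero] using hw.right
  have hLw : L (w : Fin n → ℂ) = μ • (w : Fin n → ℂ) := by
    have h1 : L' w = μ • w := hw.apply_eq_smul
    have h2 : (L' w : Fin n → ℂ) = L (w : Fin n → ℂ) := rfl
    rw [← h2, h1, Submodule.coe_smul]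
  have hMw : M *ᵥ (w : Fin n → ℂ) = μ • (w : Fin n → ℂ) := by
    rw [← Matrix.toLinAlgEquiv'_apply M]
    exact hLw
  have hμspec : μ ∈ spectrum ℂ M := by
    rw [← AlgEquiv.spectrum_eq (Matrix.toLinAlgEquiv' (R := ℂ) (n := Fin n)) M,
      ← Module.End.hasEigenvalue_iff_mem_spectrum]
    exact Module.End.hasEigenvalue_of_hasEigenvector
      ⟨Module.End.mem_eigenspace_iff.mpr hLw, hw0⟩
  refine ⟨μ, hμspec, ?_⟩
  have hEw : (exp M) *ᵥ (w : Fin n → ℂ) = lam • (w : Fin n → ℂ) := by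
    have h2 : E (w : Fin n → ℂ) = lam • (w : Fin n → ℂ) :=
      Module.End.mem_eigenspace_iff.mp w.2
    exact h2
  have hexpw : (exp M) *ᵥ (w : Fin n → ℂ) = Complex.exp μ • (w : Fin n → ℂ) :=
    exp_mulVec_eigen M μ _ hMw
  have : (lam - Complex.exp μ) • (w : Fin n → ℂ) = 0 := by
    rw [sub_smul, ← hEw, ← hexpw, sub_self]
  rcases smul_eq_zero.mp this with h | h
  · exact sub_eq_zero.mp h
  · exact absurd h hw0

lemma entry_norm_le_linfty {l : ℕ} (A : Matrix (Fin l) (Fin l) ℂ) (i j : Fin l) :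
    ‖A i j‖ ≤ ‖A‖ := by
  have h1 : ‖A i j‖₊ ≤ ∑ j', ‖A i j'‖₊ :=
    Finset.single_le_sum (f := fun j' => ‖A i j'‖₊) (fun _ _ => zero_le) (Finset.mem_univ j)
  have h2 : (∑ j', ‖A i j'‖₊) ≤ Finset.univ.sup (fun i => ∑ j', ‖A i j'‖₊) :=
    Finset.le_sup (f := fun i => ∑ j', ‖A i j'‖₊) (Finset.mem_univ i)
  have h3 := h1.trans h2
  rw [Matrix.linfty_opNorm_def]
  exact_mod_cast h3

lemma pow_entry_tendsto_zero {l : ℕ} (hl : 0 < l) (h : ℝ) (hh : 0 < h)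
    (H : Matrix (Fin l) (Fin l) ℝ)
    (hHur : ∀ μ ∈ spectrum ℂ (H.map Complex.ofReal), μ.re < 0) (i j : Fin l) :
    Tendsto (fun k => ((exp (h • H)) ^ k) i j) atTop (𝓝 0) := by
  haveI : Nonempty (Fin l) := ⟨⟨0, hl⟩⟩
  haveI : Nontrivial (Matrix (Fin l) (Fin l) ℂ) := by
    refine ⟨0, 1, fun h01 => ?_⟩
    have := congr_fun (congr_fun h01 ⟨0, hl⟩) ⟨0, hl⟩
    simp [Matrix.one_apply_eq] at this
  set Ac : Matrix (Fin l) (Fin l) ℂ := exp ((h • H).map Complex.ofReal) with hAc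
  -- the complexification of the real exponential
  have hmap1 : (exp (h • H)).map Complex.ofReal = Ac := by
    have hf : Continuous ((algebraMap ℝ ℂ).mapMatrix :
        Matrix (Fin l) (Fin l) ℝ →+* Matrix (Fin l) (Fin l) ℂ) := by
      show Continuous fun M : Matrix (Fin l) (Fin l) ℝ => M.map (algebraMap ℝ ℂ)
      exact continuous_id.matrix_map (continuous_algebraMap ℝ ℂ)
    have h1 := map_exp ((algebraMap ℝ ℂ).mapMatrix :
        Matrix (Fin l) (Fin l) ℝ →+* Matrix (Fin l) (Fin l) ℂ) hf (h • H)
    simp only [RingHom.mapMatrix_apply] at h1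
    have h2 : ((h • H).map (algebraMap ℝ ℂ) : Matrix (Fin l) (Fin l) ℂ)
        = (h • H).map Complex.ofReal := rfl
    rw [h2] at h1
    rw [hAc]
    convert h1 using 1 <;> rfl
  have hmapk : ∀ k : ℕ, ((exp (h • H)) ^ k).map Complex.ofReal = Ac ^ k := by
    intro k
    have := map_pow ((algebraMap ℝ ℂ).mapMatrix :
        Matrix (Fin l) (Fin l) ℝ →+* Matrix (Fin l) (Fin l) ℂ) (exp (h • H)) k
    rw [RingHom.mapMatrix_apply, RingHom.mapMatrix_apply] at this
    rw [show ((exp (h • H)) ^ k).map Complex.ofReal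
        = ((exp (h • H)) ^ k).map (algebraMap ℝ ℂ) from rfl, this]
    rw [show (exp (h • H)).map (algebraMap ℝ ℂ)
        = (exp (h • H)).map Complex.ofReal from rfl, hmap1]
  -- spectrum bound
  have hspec : ∀ lam ∈ spectrum ℂ Ac, ‖lam‖₊ < 1 := by
    intro lam hlam
    obtain ⟨μ', hμ', rfl⟩ := spectrum_exp_subset _ hlam
    have hsm : ((h • H).map Complex.ofReal : Matrix (Fin l) (Fin l) ℂ)
        = (Units.mk0 (h : ℂ) (by exact_mod_cast hh.ne')) • H.map Complex.ofReal := by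
      ext a b
      simp [Matrix.map_apply, Units.smul_def, Complex.ofReal_mul]
    rw [hsm, spectrum.unit_smul_eq_smul] at hμ'
    obtain ⟨μ, hμ, rfl⟩ := hμ'
    have hre : ((Units.mk0 (h : ℂ) (by exact_mod_cast hh.ne')) • μ).re = h * μ.re := by
      simp [Units.smul_def, Complex.mul_re]
    have hre0 : ((Units.mk0 (h : ℂ) (by exact_mod_cast hh.ne')) • μ).re < 0 := by
      rw [hre]
      exact mul_neg_of_pos_of_neg hh (hHur μ hμ)
    have habs : ‖Complex.exp ((Units.mk0 (h : ℂ) (by exact_mod_cast hh.ne')) • μ)‖ < 1 := by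
      rw [Complex.norm_exp]
      exact Real.exp_lt_one_iff.mpr hre0
    exact_mod_cast habs
  have hsr : spectralRadius ℂ Ac < 1 := by
    have := spectrum.spectralRadius_lt_of_forall_lt_of_nonempty (spectrum.nonempty Ac)
      (r := 1) hspec
    simpa using this
  obtain ⟨c, hc1, hc2⟩ := ENNReal.lt_iff_exists_nnreal_btwn.mp hsr
  have hc2' : c < 1 := by exact_mod_cast hc2
  have hG := spectrum.pow_nnnorm_pow_one_div_tendsto_nhds_spectralRadius Ac
  have hev : ∀ᶠ k : ℕ in atTop, (‖Ac ^ k‖₊ : ℝ≥0∞) ^ (1 / (k : ℝ)) < (c : ℝ≥0∞) :=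
    hG.eventually_lt_const hc1
  have hbound : ∀ᶠ k : ℕ in atTop, ‖Ac ^ k‖ ≤ (c : ℝ) ^ k := by
    filter_upwards [hev, eventually_ge_atTop 1] with k hk hk1
    have hk0 : (k : ℝ) ≠ 0 := by positivity
    have h5 := ENNReal.rpow_le_rpow hk.le (by positivity : (0:ℝ) ≤ (k : ℝ))
    rw [← ENNReal.rpow_mul, one_div_mul_cancel hk0, ENNReal.rpow_one] at h5
    have h6 : (‖Ac ^ k‖₊ : ℝ≥0∞) ≤ ((c ^ k : ℝ≥0) : ℝ≥0∞) := by
      rw [ENNReal.coe_pow, ← ENNReal.rpow_natCast (c : ℝ≥0∞) k]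
      exact h5
    have h7 : ‖Ac ^ k‖₊ ≤ c ^ k := ENNReal.coe_le_coe.mp h6
    calc ‖Ac ^ k‖ = ((‖Ac ^ k‖₊ : ℝ≥0) : ℝ) := rfl
    _ ≤ ((c ^ k : ℝ≥0) : ℝ) := by exact_mod_cast h7
    _ = (c : ℝ) ^ k := by push_cast; ring
  have hc0 : Tendsto (fun k : ℕ => (c : ℝ) ^ k) atTop (𝓝 0) :=
    tendsto_pow_atTop_nhds_zero_of_lt_one c.coe_nonneg (by exact_mod_cast hc2')
  have hnorm0 : Tendsto (fun k : ℕ => ‖Ac ^ k‖) atTop (𝓝 0) :=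
    squeeze_zero' (Eventually.of_forall fun k => norm_nonneg _) hbound hc0
  refine squeeze_zero_norm (fun k => ?_) hnorm0
  have h8 : ‖((exp (h • H)) ^ k) i j‖ = ‖(Ac ^ k) i j‖ := by
    rw [← hmapk k]
    simp [Matrix.map_apply]
  rw [h8]
  exact entry_norm_le_linfty _ i j


section PartE

/-- transporting quadratic forms through a matrix product -/
lemma dot_mulVec_conj {n : ℕ} (A P : Matrix (Fin n) (Fin n) ℝ) (e : Fin n → ℝ) :
    (A *ᵥ e) ⬝ᵥ (P *ᵥ (A *ᵥ e)) = e ⬝ᵥ ((Aᵀ * P * A) *ᵥ e) := by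
  calc (A *ᵥ e) ⬝ᵥ (P *ᵥ (A *ᵥ e))
      = (e ᵥ* Aᵀ) ⬝ᵥ (P *ᵥ (A *ᵥ e)) := by rw [Matrix.vecMul_transpose]
    _ = ((e ᵥ* Aᵀ) ᵥ* P) ⬝ᵥ (A *ᵥ e) := by rw [Matrix.dotProduct_mulVec]
    _ = (e ᵥ* (Aᵀ * P)) ⬝ᵥ (A *ᵥ e) := by rw [Matrix.vecMul_vecMul]
    _ = ((e ᵥ* (Aᵀ * P)) ᵥ* A) ⬝ᵥ e := by rw [Matrix.dotProduct_mulVec]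
    _ = (e ᵥ* (Aᵀ * P * A)) ⬝ᵥ e := by rw [Matrix.vecMul_vecMul]
    _ = e ⬝ᵥ ((Aᵀ * P * A) *ᵥ e) := by rw [Matrix.dotProduct_mulVec]

lemma quantSet_shift {m N : ℕ} {U : Fin N → Fin m → ℝ} (hU : U ∈ quantSet m N) :
    shiftSeq U ∈ quantSet m N := by
  intro i j
  unfold shiftSeq
  split_ifs with hi
  · exact hU _ j
  · right; left; rfl

lemma mpcCost_nonneg {n m N : ℕ} (Aq : Matrix (Fin n) (Fin n) ℝ)
    (Bq : Matrix (Fin n) (Fin m) ℝ) (H : Matrix (Fin n) (Fin n) ℝ) (h : ℝ)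
    {P Q : Matrix (Fin n) (Fin n) ℝ} {R : Matrix (Fin m) (Fin m) ℝ}
    (hP : P.PosSemidef) (hQ : Q.PosSemidef) (hR : R.PosSemidef)
    (x r : Fin n → ℝ) (U : Fin N → Fin m → ℝ) :
    0 ≤ mpcCost Aq Bq H h P Q R x r U := by
  unfold mpcCost
  have h1 : ∀ (M : Matrix (Fin n) (Fin n) ℝ), M.PosSemidef → ∀ v : Fin n → ℝ,
      0 ≤ v ⬝ᵥ (M *ᵥ v) := fun M hM v => by simpa using hM.dotProduct_mulVec_nonneg v
  have h2 : ∀ v : Fin m → ℝ, 0 ≤ v ⬝ᵥ (R *ᵥ v) := fun v => by simpa using hR.dotProduct_mulVec_nonneg v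
  have := Finset.sum_nonneg (s := Finset.univ)
    (f := fun i : Fin N =>
      ((predState Aq Bq h x U i - refState H h r i) ⬝ᵥ
          (Q *ᵥ (predState Aq Bq h x U i - refState H h r i)) +
        (U i) ⬝ᵥ (R *ᵥ (U i))))
    (fun i _ => add_nonneg (h1 Q hQ _) (h2 _))
  exact add_nonneg (h1 P hP _) this

/-- The fundamental decrease property of the MPC cost along the closed loop. -/
lemma cost_decrease {n m N : ℕ} (hN : 0 < N) (h : ℝ)
    (H : Matrix (Fin n) (Fin n) ℝ) (Bq : Matrix (Fin n) (Fin m) ℝ)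
    (P Q : Matrix (Fin n) (Fin n) ℝ) (R : Matrix (Fin m) (Fin m) ℝ)
    (hR : R.PosSemidef)
    (hneg : (-(Q - P + (NormedSpace.exp (h • H))ᵀ * P * (NormedSpace.exp (h • H)))).PosSemidef)
    (x r : Fin n → ℝ) (U : Fin N → Fin m → ℝ)
    (x' r' : Fin n → ℝ)
    (hx' : x' = (NormedSpace.exp (h • H)) *ᵥ x + h • (Bq *ᵥ U ⟨0, hN⟩))
    (hr' : r' = NormedSpace.exp (h • H) *ᵥ r) :
    mpcCost (NormedSpace.exp (h • H)) Bq H h P Q R x' r' (shiftSeq U) ≤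
      mpcCost (NormedSpace.exp (h • H)) Bq H h P Q R x r U
        - (x - r) ⬝ᵥ (Q *ᵥ (x - r)) := by
  set A := NormedSpace.exp (h • H) with hA
  -- shifted predicted states
  have hshift : ∀ i : ℕ, predState A Bq h x' (shiftSeq U) i = predState A Bq h x U (i + 1) := by
    intro i
    induction i with
    | zero =>
        show x' = predState A Bq h x U 1
        rw [hx']
        show _ = A *ᵥ (predState A Bq h x U 0) +
          h • (Bq *ᵥ (if hi : 0 < N then U ⟨0, hi⟩ else 0))
        rw [dif_pos hN]
        rfl
    | succ i ih =>
        show A *ᵥ (predState A Bq h x' (shiftSeq U) i) +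
            h • (Bq *ᵥ (if hi : i < N then shiftSeq U ⟨i, hi⟩ else 0)) = _
        rw [ih]
        have harg : (if hi : i < N then shiftSeq U ⟨i, hi⟩ else 0)
            = (if hi : i + 1 < N then U ⟨i + 1, hi⟩ else 0) := by
          by_cases hi : i < N
          · rw [dif_pos hi]
            rfl
          · rw [dif_neg hi, dif_neg (fun hc => hi (Nat.lt_of_succ_lt hc))]
        rw [harg]
        rfl
  -- shifted reference states
  have href : ∀ i : ℕ, refState H h r' i = refState H h r (i + 1) := by
    intro i
    unfold refState
    rw [hr', Matrix.mulVec_mulVec, ← hA, ← pow_succ]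
  -- error sequence and input cost sequence
  set e : ℕ → (Fin n → ℝ) := fun i => predState A Bq h x U i - refState H h r i with he
  set g : ℕ → ℝ := fun i => e i ⬝ᵥ (Q *ᵥ e i) with hg
  set s : ℕ → ℝ := fun i => if hi : i < N then (U ⟨i, hi⟩) ⬝ᵥ (R *ᵥ (U ⟨i, hi⟩)) else 0 with hs
  have hsN : s N = 0 := dif_neg (lt_irrefl N)
  have hs0 : 0 ≤ s 0 := by
    rw [hs]
    simp only [dif_pos hN]
    simpa using hR.dotProduct_mulVec_nonneg (U ⟨0, hN⟩)
  -- terminal state of the shifted problem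
  have hterm : predState A Bq h x' (shiftSeq U) N - refState H h r' N = A *ᵥ e N := by
    rw [hshift N, href N]
    have h1 : predState A Bq h x U (N + 1) = A *ᵥ predState A Bq h x U N := by
      show A *ᵥ (predState A Bq h x U N) +
        h • (Bq *ᵥ (if hi : N < N then U ⟨N, hi⟩ else 0)) = _
      rw [dif_neg (lt_irrefl N)]
      simp
    have h2 : refState H h r (N + 1) = A *ᵥ refState H h r N := by
      unfold refState
      rw [← hA, pow_succ', ← Matrix.mulVec_mulVec]
    rw [h1, h2, ← Matrix.mulVec_sub]
  -- the two costs
  have hcost : mpcCost A Bq H h P Q R x r U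
      = e N ⬝ᵥ (P *ᵥ e N) + ∑ i ∈ Finset.range N, (g i + s i) := by
    unfold mpcCost
    congr 1
    rw [← Fin.sum_univ_eq_sum_range (fun i => g i + s i) N]
    refine Finset.sum_congr rfl fun i _ => ?_
    rw [hg, hs]
    simp only [dif_pos i.isLt, Fin.eta]
    rfl
  have hcost' : mpcCost A Bq H h P Q R x' r' (shiftSeq U)
      = (A *ᵥ e N) ⬝ᵥ (P *ᵥ (A *ᵥ e N)) + ∑ i ∈ Finset.range N, (g (i + 1) + s (i + 1)) := by
    unfold mpcCost
    rw [hterm]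
    congr 1
    rw [← Fin.sum_univ_eq_sum_range (fun i => g (i + 1) + s (i + 1)) N]
    refine Finset.sum_congr rfl fun i _ => ?_
    congr 1
    · rw [hshift i, href i, hg]
    · show shiftSeq U i ⬝ᵥ (R *ᵥ shiftSeq U i)
          = if hi : (i : ℕ) + 1 < N then (U ⟨(i : ℕ) + 1, hi⟩) ⬝ᵥ (R *ᵥ (U ⟨(i : ℕ) + 1, hi⟩)) else 0
      by_cases hi : (i : ℕ) + 1 < N
      · rw [dif_pos hi]
        show (shiftSeq U i) ⬝ᵥ (R *ᵥ (shiftSeq U i)) = _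
        unfold shiftSeq
        rw [dif_pos hi]
      · rw [dif_neg hi]
        show (shiftSeq U i) ⬝ᵥ (R *ᵥ (shiftSeq U i)) = 0
        unfold shiftSeq
        rw [dif_neg hi]
        simp
  -- reindex the sum
  have hsum : ∑ i ∈ Finset.range N, (g (i + 1) + s (i + 1))
      = ∑ i ∈ Finset.range N, (g i + s i) + (g N + s N) - (g 0 + s 0) := by
    have h1 := Finset.sum_range_succ' (fun i => g i + s i) N
    have h2 := Finset.sum_range_succ (fun i => g i + s i) N
    rw [h2] at h1
    linarith
  -- terminal decrease
  have hterm2 : (A *ᵥ e N) ⬝ᵥ (P *ᵥ (A *ᵥ e N)) + g N - e N ⬝ᵥ (P *ᵥ e N) ≤ 0 := by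
    have hq := hneg.dotProduct_mulVec_nonneg (e N)
    simp only [star_trivial, Matrix.neg_mulVec, Matrix.add_mulVec, Matrix.sub_mulVec,
      dotProduct_neg, dotProduct_add, dotProduct_sub] at hq
    have h5 := dot_mulVec_conj A P (e N)
    rw [hg]
    simp only []
    linarith [h5, hq]
  -- initial error
  have hg0 : g 0 = (x - r) ⬝ᵥ (Q *ᵥ (x - r)) := by
    have h0 : e 0 = x - r := by
      show predState A Bq h x U 0 - refState H h r 0 = x - r
      have : refState H h r 0 = r := by
        unfold refState
        rw [pow_zero, Matrix.one_mulVec]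
      rw [this]
      rfl
    show e 0 ⬝ᵥ (Q *ᵥ e 0) = _
    rw [h0]
  rw [hcost, hcost', hsum, ← hg0]
  have hgN : g N = e N ⬝ᵥ (Q *ᵥ e N) := rfl
  linarith [hterm2, hs0, hsN.ge, hsN.le]

end PartE

lemma posdef_quad_lower {n : ℕ} (hn : 0 < n) (Q : Matrix (Fin n) (Fin n) ℝ) (hQ : Q.PosDef) :
    ∃ c > 0, ∀ x : Fin n → ℝ, c * ‖x‖ ^ 2 ≤ x ⬝ᵥ (Q *ᵥ x) := by
  haveI : Nonempty (Fin n) := ⟨⟨0, hn⟩⟩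
  have hfc : Continuous fun x : Fin n → ℝ => x ⬝ᵥ (Q *ᵥ x) := by
    have hm : Continuous fun x : Fin n → ℝ => Q *ᵥ x :=
      (Matrix.mulVecLin Q).continuous_of_finiteDimensional
    show Continuous fun x : Fin n → ℝ => ∑ i, x i * (Q *ᵥ x) i
    exact continuous_finset_sum _ fun i _ =>
      (continuous_apply i).mul ((continuous_apply i).comp hm)
  have hSc : IsCompact (Metric.sphere (0 : Fin n → ℝ) 1) := isCompact_sphere _ _
  have hSne : (Metric.sphere (0 : Fin n → ℝ) 1).Nonempty :=
    (NormedSpace.sphere_nonempty (E := Fin n → ℝ) (x := 0) (r := 1)).mpr zero_le_one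
  obtain ⟨x₀, hx₀S, hx₀min⟩ := hSc.exists_isMinOn hSne hfc.continuousOn
  have hx₀n : ‖x₀‖ = 1 := mem_sphere_zero_iff_norm.mp hx₀S
  have hx₀0 : x₀ ≠ 0 := by
    intro h0
    rw [h0, norm_zero] at hx₀n
    norm_num at hx₀n
  refine ⟨x₀ ⬝ᵥ (Q *ᵥ x₀), by simpa using hQ.dotProduct_mulVec_pos hx₀0, fun x => ?_⟩
  rcases eq_or_ne x 0 with rfl | hx
  · simp
  · have hnx : (0:ℝ) < ‖x‖ := norm_pos_iff.mpr hx
    set y := ‖x‖⁻¹ • x with hy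
    have hyS : y ∈ Metric.sphere (0 : Fin n → ℝ) 1 := by
      rw [mem_sphere_zero_iff_norm, hy, norm_smul, norm_inv, norm_norm,
        inv_mul_cancel₀ hnx.ne']
    have h1 : x₀ ⬝ᵥ (Q *ᵥ x₀) ≤ y ⬝ᵥ (Q *ᵥ y) := hx₀min hyS
    have hxy : x = ‖x‖ • y := by
      rw [hy, smul_smul, mul_inv_cancel₀ hnx.ne', one_smul]
    have h2 : x ⬝ᵥ (Q *ᵥ x) = ‖x‖ ^ 2 * (y ⬝ᵥ (Q *ᵥ y)) := by
      conv_lhs => rw [hxy]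
      rw [Matrix.mulVec_smul, smul_dotProduct, dotProduct_smul, smul_eq_mul, smul_eq_mul]
      ring
    rw [h2]
    have := mul_le_mul_of_nonneg_left h1 (by positivity : (0:ℝ) ≤ ‖x‖ ^ 2)
    nlinarith

/-- Theorem 1, asymptotic stability form: if in addition `H` is Hurwitz,
then along any quantized MPC closed-loop trajectory `x_q(k) → 0`. -/
theorem stmt5 {n m N : ℕ} (hN : 0 < N) (h : ℝ) (hh : 0 < h)
    (Aq H : Matrix (Fin n) (Fin n) ℝ) (Bq : Matrix (Fin n) (Fin m) ℝ)
    (P Q : Matrix (Fin n) (Fin n) ℝ) (R : Matrix (Fin m) (Fin m) ℝ)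
    (hP : P.PosDef) (hQ : Q.PosDef) (hR : R.PosDef)
    (hA : Aq = NormedSpace.exp (h • H))
    (hneg : (-(Q - P + Aqᵀ * P * Aq)).PosDef)
    (hHurwitz : ∀ μ ∈ spectrum ℂ (H.map (Complex.ofReal)), μ.re < 0)
    (xq r : ℕ → (Fin n → ℝ)) (Ustar : ℕ → (Fin N → Fin m → ℝ))
    (hmem : ∀ k, Ustar k ∈ quantSet m N)
    (hmin : ∀ k, ∀ U ∈ quantSet m N,
      mpcCost Aq Bq H h P Q R (xq k) (r k) (Ustar k) ≤
        mpcCost Aq Bq H h P Q R (xq k) (r k) U)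
    (hx : ∀ k, xq (k + 1) = Aq *ᵥ xq k + h • (Bq *ᵥ Ustar k ⟨0, hN⟩))
    (hr : ∀ k, r (k + 1) = NormedSpace.exp (h • H) *ᵥ r k) :
    Filter.Tendsto xq Filter.atTop (nhds 0) := by
  rcases Nat.eq_zero_or_pos n with hn | hn
  · subst hn
    have hxq0 : xq = fun _ => (0 : Fin 0 → ℝ) := by
      funext k i
      exact i.elim0
    rw [hxq0]
    exact tendsto_const_nhds
  subst hA
  set A := NormedSpace.exp (h • H) with hAdef
  set V : ℕ → ℝ := fun k => mpcCost A Bq H h P Q R (xq k) (r k) (Ustar k) with hV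
  set g : ℕ → ℝ := fun k => (xq k - r k) ⬝ᵥ (Q *ᵥ (xq k - r k)) with hgdef
  have hdec : ∀ k, V (k + 1) ≤ V k - g k := by
    intro k
    have h1 := hmin (k + 1) (shiftSeq (Ustar k)) (quantSet_shift (hmem k))
    have h2 := cost_decrease hN h H Bq P Q R hR.posSemidef hneg.posSemidef
      (xq k) (r k) (Ustar k) (xq (k + 1)) (r (k + 1)) (hx k) (hr k)
    exact h1.trans h2
  have hV0 : ∀ k, 0 ≤ V k := fun k =>
    mpcCost_nonneg _ _ _ _ hP.posSemidef hQ.posSemidef hR.posSemidef _ _ _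
  have hgnn : ∀ k, 0 ≤ g k := by
    intro k
    have h1 := hQ.posSemidef.dotProduct_mulVec_nonneg (xq k - r k)
    rwa [star_trivial] at h1
  have hsum0 : ∀ K, ∑ k ∈ Finset.range K, g k + V K ≤ V 0 := by
    intro K
    induction K with
    | zero => simp
    | succ K ih =>
        rw [Finset.sum_range_succ]
        have := hdec K
        linarith
  have hsum : ∀ K, ∑ k ∈ Finset.range K, g k ≤ V 0 := fun K => by
    linarith [hsum0 K, hV0 K]
  have hg0 : Filter.Tendsto g atTop (𝓝 0) :=
    (summable_of_sum_range_le hgnn hsum).tendsto_atTop_zero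
  obtain ⟨c, hc, hcq⟩ := posdef_quad_lower hn Q hQ
  have hb : ∀ k, ‖xq k - r k‖ ≤ Real.sqrt (g k / c) := by
    intro k
    have h1 : ‖xq k - r k‖ ^ 2 ≤ g k / c := by
      rw [le_div_iff₀ hc]
      have := hcq (xq k - r k)
      linarith
    have h2 := Real.sqrt_le_sqrt h1
    rwa [Real.sqrt_sq (norm_nonneg _)] at h2
  have hgc : Filter.Tendsto (fun k => Real.sqrt (g k / c)) atTop (𝓝 0) := by
    have h3 : Filter.Tendsto (fun k => g k / c) atTop (𝓝 0) := by
      simpa using hg0.div_const c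
    have h4 := (Real.continuous_sqrt.tendsto 0).comp h3
    simpa [Function.comp_def] using h4
  have herr : Filter.Tendsto (fun k => xq k - r k) atTop (𝓝 0) :=
    tendsto_zero_iff_norm_tendsto_zero.mpr
      (squeeze_zero (fun k => norm_nonneg _) hb hgc)
  -- the reference converges to zero since H is Hurwitz
  have hrk : ∀ k, r k = (A ^ k) *ᵥ r 0 := by
    intro k
    induction k with
    | zero => rw [pow_zero, Matrix.one_mulVec]
    | succ k ih =>
        rw [hr k, ih, Matrix.mulVec_mulVec, ← pow_succ']
  have href0 : Filter.Tendsto r atTop (𝓝 0) := by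
    rw [tendsto_pi_nhds]
    intro j
    simp only [Pi.zero_apply]
    have heq : (fun k => r k j) = fun k => ∑ i, (A ^ k) j i * r 0 i := by
      funext k
      rw [hrk k]
      rfl
    rw [heq]
    have h0 : (0 : ℝ) = ∑ _i : Fin n, (0 : ℝ) := by simp
    rw [h0]
    apply tendsto_finset_sum
    intro i _
    simpa using (pow_entry_tendsto_zero hn h hh H hHurwitz j i).mul_const (r 0 i)
  have hfin := herr.add href0
  rw [add_zero] at hfin
  have : (fun k => (xq k - r k) + r k) = xq := by
    funext k
    simp
  rwa [this] at hfin
end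

section
/- (Theorem 2, Algorithm 1 convergence.) Assume A_q = exp(hH) and that Q − P + A_qᵀ P A_q is negative definite. Let x_q, r : ℕ → ℝ^n and Ũ*(k) ∈ 𝒰^N be sequences such that for every k: x_q(k+1) = A_q x_q(k) + h B_q ũ*_0(k) where ũ*_0(k) is the first element of Ũ*(k); r(k+1) = exp(hH) r(k); and J(x_q(k+1), r(k+1), Ũ*(k+1)) ≤ J(x_q(k+1), r(k+1), Û(k+1)), where Û(k+1) is the shifted sequence obtained from Ũ*(k) by dropping its first element and appending the zero vector. Then the sequence k ↦ J(x_q(k), r(k), Ũ*(k)) is non-increasing, and the tracking error satisfies ‖x_q(k) − r(k)‖ → 0 as k → ∞. -/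
open Matrix Filter Topology

private lemma quadPos_le {n : ℕ} {M : Matrix (Fin n) (Fin n) ℝ} (hM : M.PosSemidef)
    (v : Fin n → ℝ) : 0 ≤ v ⬝ᵥ (M *ᵥ v) := by
  simpa using hM.dotProduct_mulVec_nonneg v

private lemma mulVec_quad {n : ℕ} (A P : Matrix (Fin n) (Fin n) ℝ) (v : Fin n → ℝ) :
    (A *ᵥ v) ⬝ᵥ (P *ᵥ (A *ᵥ v)) = v ⬝ᵥ ((Aᵀ * P * A) *ᵥ v) := by
  rw [Matrix.dotProduct_mulVec, Matrix.dotProduct_mulVec, Matrix.dotProduct_mulVec,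
    Matrix.vecMul_vecMul]
  conv_rhs => rw [mul_assoc, ← Matrix.vecMul_vecMul, Matrix.vecMul_transpose]

open scoped MatrixOrder in
private lemma tendsto_zero_of_quad {n : ℕ} {Q : Matrix (Fin n) (Fin n) ℝ} (hQ : Q.PosDef)
    (e : ℕ → Fin n → ℝ)
    (he : Filter.Tendsto (fun k => e k ⬝ᵥ (Q *ᵥ e k)) Filter.atTop (nhds 0)) :
    Filter.Tendsto e Filter.atTop (nhds 0) := by
  classical
  obtain ⟨S, hsym, hSS, hdet⟩ :
      ∃ S : Matrix (Fin n) (Fin n) ℝ, Sᵀ = S ∧ S * S = Q ∧ IsUnit S.det := by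
    refine ⟨CFC.sqrt Q, ?_, CFC.sqrt_mul_sqrt_self Q hQ.posSemidef.nonneg, ?_⟩
    · have h1 := (CFC.sqrt_nonneg Q).posSemidef.1
      rwa [Matrix.IsHermitian, Matrix.conjTranspose_eq_transpose_of_trivial] at h1
    · refine isUnit_iff_ne_zero.2 fun h0 => ?_
      have h2 : (CFC.sqrt Q).det * (CFC.sqrt Q).det = Q.det := by
        rw [← Matrix.det_mul, CFC.sqrt_mul_sqrt_self Q hQ.posSemidef.nonneg]
      rw [h0, mul_zero] at h2
      exact absurd h2.symm (ne_of_gt hQ.det_pos)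
  have hquad : ∀ k, e k ⬝ᵥ (Q *ᵥ e k) = (S *ᵥ e k) ⬝ᵥ (S *ᵥ e k) := by
    intro k
    conv_lhs => rw [← hSS]
    rw [← Matrix.mulVec_mulVec, Matrix.dotProduct_mulVec, ← hsym, Matrix.vecMul_transpose,
      hsym]
  have hcoord : ∀ j, Tendsto (fun k => (S *ᵥ e k) j) atTop (nhds 0) := by
    intro j
    rw [tendsto_zero_iff_abs_tendsto_zero]
    have hle : ∀ k, |(S *ᵥ e k) j| ≤ Real.sqrt (e k ⬝ᵥ (Q *ᵥ e k)) := by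
      intro k
      rw [hquad k, ← Real.sqrt_sq_eq_abs]
      apply Real.sqrt_le_sqrt
      have := Finset.single_le_sum
        (f := fun i => (S *ᵥ e k) i * (S *ᵥ e k) i)
        (fun i _ => mul_self_nonneg _) (Finset.mem_univ j)
      simpa [dotProduct, sq] using this
    have hsq : Tendsto (fun k => Real.sqrt (e k ⬝ᵥ (Q *ᵥ e k))) atTop (nhds 0) := by
      have := (Real.continuous_sqrt.tendsto 0).comp he
      simpa [Function.comp_def] using this
    exact squeeze_zero (fun k => abs_nonneg _) hle hsq
  have hSe : Tendsto (fun k => S *ᵥ e k) atTop (nhds 0) := by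
    rw [tendsto_pi_nhds]
    intro j
    simpa using hcoord j
  have hinv : S⁻¹ * S = 1 := Matrix.nonsing_inv_mul S hdet
  have hcont : Continuous fun y : Fin n → ℝ => S⁻¹ *ᵥ y :=
    LinearMap.continuous_of_finiteDimensional (Matrix.mulVecLin S⁻¹)
  have h3 : Tendsto (fun k => S⁻¹ *ᵥ (S *ᵥ e k)) atTop (nhds (S⁻¹ *ᵥ 0)) :=
    (hcont.tendsto 0).comp hSe
  simpa [Matrix.mulVec_mulVec, hinv, Matrix.one_mulVec, Matrix.mulVec_zero] using h3

/-- Theorem 2, Algorithm 1 convergence: if at each step the chosen quantized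
sequence does at least as well as the shifted previous sequence, then the cost sequence is
non-increasing and the tracking error converges to zero. -/
theorem stmt13 {n m N : ℕ} (hN : 0 < N) (h : ℝ) (hh : 0 < h)
    (Aq H : Matrix (Fin n) (Fin n) ℝ) (Bq : Matrix (Fin n) (Fin m) ℝ)
    (P Q : Matrix (Fin n) (Fin n) ℝ) (R : Matrix (Fin m) (Fin m) ℝ)
    (hP : P.PosDef) (hQ : Q.PosDef) (hR : R.PosDef)
    (hA : Aq = NormedSpace.exp (h • H))
    (hneg : (-(Q - P + Aqᵀ * P * Aq)).PosDef)
    (xq r : ℕ → (Fin n → ℝ)) (Utilde : ℕ → (Fin N → Fin m → ℝ))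
    (hmem : ∀ k, Utilde k ∈ quantSet m N)
    (hx : ∀ k, xq (k + 1) = Aq *ᵥ xq k + h • (Bq *ᵥ Utilde k ⟨0, hN⟩))
    (hr : ∀ k, r (k + 1) = NormedSpace.exp (h • H) *ᵥ r k)
    (hcmp : ∀ k, mpcCost Aq Bq H h P Q R (xq (k + 1)) (r (k + 1)) (Utilde (k + 1)) ≤
      mpcCost Aq Bq H h P Q R (xq (k + 1)) (r (k + 1)) (shiftSeq (Utilde k))) :
    Antitone (fun k => mpcCost Aq Bq H h P Q R (xq k) (r k) (Utilde k)) ∧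
      Filter.Tendsto (fun k => xq k - r k) Filter.atTop (nhds 0) := by
  obtain ⟨M, rfl⟩ : ∃ M, N = M + 1 := ⟨N - 1, (Nat.succ_pred_eq_of_pos hN).symm⟩
  have hQ0 : ∀ v : Fin n → ℝ, 0 ≤ v ⬝ᵥ (Q *ᵥ v) := fun v => quadPos_le hQ.posSemidef v
  have hkey : ∀ k,
      mpcCost Aq Bq H h P Q R (xq (k+1)) (r (k+1)) (shiftSeq (Utilde k)) ≤
        mpcCost Aq Bq H h P Q R (xq k) (r k) (Utilde k)
          - (xq k - r k) ⬝ᵥ (Q *ᵥ (xq k - r k)) := by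
    intro k
    set U := Utilde k with hU
    -- reference shift
    have hρ : ∀ i : ℕ, refState H h (r (k+1)) i = refState H h (r k) (i+1) := by
      intro i
      simp only [refState, hr k, Matrix.mulVec_mulVec]
      rw [← pow_succ]
    -- predicted-state shift
    have hps : ∀ i : ℕ, i < M + 1 →
        predState Aq Bq h (xq (k+1)) (shiftSeq U) i = predState Aq Bq h (xq k) U (i+1) := by
      intro i
      induction i with
      | zero =>
          intro _
          have h0 : predState Aq Bq h (xq k) U 1
              = Aq *ᵥ xq k + h • (Bq *ᵥ U ⟨0, hN⟩) := by
            simp [predState, hN]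
          simp [predState, hx k, h0]
          rfl
      | succ i ih =>
          intro hi
          have hi' : i < M + 1 := Nat.lt_of_succ_lt hi
          have hshift : shiftSeq U ⟨i, hi'⟩ = U ⟨i+1, hi⟩ := by simp [shiftSeq, hi]
          simp [predState, hi', ih hi', hshift, hi]
    have hpsN : predState Aq Bq h (xq (k+1)) (shiftSeq U) (M+1)
        = Aq *ᵥ predState Aq Bq h (xq k) U (M+1) := by
      have h1 : shiftSeq U ⟨M, Nat.lt_succ_self M⟩ = 0 := by simp [shiftSeq]
      simp [predState, Nat.lt_succ_self M, h1, hps M (Nat.lt_succ_self M)]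
    have hρA : Aq *ᵥ refState H h (r k) (M+1) = refState H h (r k) (M+2) := by
      simp only [refState, hA, Matrix.mulVec_mulVec]
      rw [← pow_succ']
    -- abbreviations
    set eN : Fin n → ℝ :=
      predState Aq Bq h (xq k) U (M+1) - refState H h (r k) (M+1) with heN
    set qt : ℕ → ℝ := fun i =>
      (predState Aq Bq h (xq k) U i - refState H h (r k) i) ⬝ᵥ
        (Q *ᵥ (predState Aq Bq h (xq k) U i - refState H h (r k) i)) with hqt
    set rt : ℕ → ℝ := fun i =>
      if hi : i < M+1 then (U ⟨i, hi⟩) ⬝ᵥ (R *ᵥ U ⟨i, hi⟩) else 0 with hrt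
    have Jorig : mpcCost Aq Bq H h P Q R (xq k) (r k) U
        = eN ⬝ᵥ (P *ᵥ eN) + ∑ i ∈ Finset.range (M+1), (qt i + rt i) := by
      rw [mpcCost]
      congr 1
      rw [← Fin.sum_univ_eq_sum_range (fun i => qt i + rt i) (M+1)]
      refine Finset.sum_congr rfl fun i _ => ?_
      simp [hqt, hrt, i.isLt]
      intro h; have := i.isLt; omega
    have Jshift : mpcCost Aq Bq H h P Q R (xq (k+1)) (r (k+1)) (shiftSeq U)
        = (Aq *ᵥ eN) ⬝ᵥ (P *ᵥ (Aq *ᵥ eN))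
          + ∑ i ∈ Finset.range (M+1), (qt (i+1) + rt (i+1)) := by
      rw [mpcCost]
      congr 1
      · have hterm : predState Aq Bq h (xq (k+1)) (shiftSeq U) (M+1)
            - refState H h (r (k+1)) (M+1) = Aq *ᵥ eN := by
          rw [hpsN, hρ (M+1), ← hρA, ← Matrix.mulVec_sub]
        rw [hterm]
      · rw [← Fin.sum_univ_eq_sum_range (fun i => qt (i+1) + rt (i+1)) (M+1)]
        refine Finset.sum_congr rfl fun i _ => ?_
        congr 1
        · rw [hps i.1 i.isLt, hρ i.1]
        · by_cases hi : (i : ℕ) + 1 < M + 1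
          · simp [shiftSeq, hrt, hi]
            intro h; omega
          · simp [shiftSeq, hrt, hi]
            intro h; omega
    have hrtN : rt (M+1) = 0 := by simp [hrt]
    have hsum : (∑ i ∈ Finset.range (M+1), (qt (i+1) + rt (i+1))) + (qt 0 + rt 0)
        = (∑ i ∈ Finset.range (M+1), (qt i + rt i)) + (qt (M+1) + rt (M+1)) := by
      rw [← Finset.sum_range_succ' (fun i => qt i + rt i) (M+1),
        Finset.sum_range_succ]
    have hquadA : (Aq *ᵥ eN) ⬝ᵥ (P *ᵥ (Aq *ᵥ eN)) = eN ⬝ᵥ ((Aqᵀ * P * Aq) *ᵥ eN) :=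
      mulVec_quad Aq P eN
    have hnegN : eN ⬝ᵥ ((Q - P + Aqᵀ * P * Aq) *ᵥ eN) ≤ 0 := by
      have h1 := quadPos_le hneg.posSemidef eN
      rw [Matrix.neg_mulVec, dotProduct_neg] at h1
      linarith
    have hexp : eN ⬝ᵥ ((Q - P + Aqᵀ * P * Aq) *ᵥ eN)
        = qt (M+1) - eN ⬝ᵥ (P *ᵥ eN) + eN ⬝ᵥ ((Aqᵀ * P * Aq) *ᵥ eN) := by
      have hqtN : qt (M+1) = eN ⬝ᵥ (Q *ᵥ eN) := rfl
      rw [hqtN, Matrix.add_mulVec, Matrix.sub_mulVec, dotProduct_add,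
        dotProduct_sub]
    have hrt0 : 0 ≤ rt 0 := by
      rw [hrt]
      simpa using quadPos_le hR.posSemidef (U ⟨0, hN⟩)
    have hqt0 : qt 0 = (xq k - r k) ⬝ᵥ (Q *ᵥ (xq k - r k)) := by
      have h0 : refState H h (r k) 0 = r k := by simp [refState]
      simp only [hqt, predState, h0]
    rw [Jshift, Jorig, hquadA, ← hqt0]
    nlinarith [hnegN, hexp, hrt0, hsum, hrtN]
  have hstep : ∀ k, mpcCost Aq Bq H h P Q R (xq (k+1)) (r (k+1)) (Utilde (k+1)) ≤
      mpcCost Aq Bq H h P Q R (xq k) (r k) (Utilde k)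
        - (xq k - r k) ⬝ᵥ (Q *ᵥ (xq k - r k)) :=
    fun k => (hcmp k).trans (hkey k)
  have hanti : Antitone fun k => mpcCost Aq Bq H h P Q R (xq k) (r k) (Utilde k) := by
    refine antitone_nat_of_succ_le fun k => ?_
    have := hstep k
    have h2 := hQ0 (xq k - r k)
    linarith
  refine ⟨hanti, ?_⟩
  have hVnonneg : ∀ k, 0 ≤ mpcCost Aq Bq H h P Q R (xq k) (r k) (Utilde k) := by
    intro k
    rw [mpcCost]
    refine add_nonneg (quadPos_le hP.posSemidef _) (Finset.sum_nonneg fun i _ => ?_)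
    exact add_nonneg (quadPos_le hQ.posSemidef _) (quadPos_le hR.posSemidef _)
  have hbdd : BddBelow (Set.range fun k => mpcCost Aq Bq H h P Q R (xq k) (r k) (Utilde k)) := by
    refine ⟨0, fun x hx => ?_⟩
    obtain ⟨j, rfl⟩ := hx
    exact hVnonneg j
  have hV : Tendsto (fun k => mpcCost Aq Bq H h P Q R (xq k) (r k) (Utilde k)) atTop
      (nhds (⨅ k, mpcCost Aq Bq H h P Q R (xq k) (r k) (Utilde k))) :=
    tendsto_atTop_ciInf hanti hbdd
  have hV1 : Tendsto (fun k => mpcCost Aq Bq H h P Q R (xq (k+1)) (r (k+1)) (Utilde (k+1)))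
      atTop (nhds (⨅ k, mpcCost Aq Bq H h P Q R (xq k) (r k) (Utilde k))) :=
    hV.comp (tendsto_add_atTop_nat 1)
  have hd : Tendsto (fun k => mpcCost Aq Bq H h P Q R (xq k) (r k) (Utilde k)
      - mpcCost Aq Bq H h P Q R (xq (k+1)) (r (k+1)) (Utilde (k+1))) atTop (nhds 0) := by
    have := hV.sub hV1
    simpa using this
  have hquadlim : Tendsto (fun k => (xq k - r k) ⬝ᵥ (Q *ᵥ (xq k - r k))) atTop (nhds 0) :=
    squeeze_zero (fun k => hQ0 _) (fun k => by linarith [hstep k]) hd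
  exact tendsto_zero_of_quad hQ _ hquadlim
end
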